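/- For each j ≥ 0, let P_j ≤ P be the subquandle of Thompson's quandle generated by p_k for k ≥ j. Then p_j ∈ P_j \ P_{j+1}, so the chain P = P_0 ≥ P_1 ≥ P_2 ≥ ⋯ is strictly decreasing. -/

import Mathlib

open Quandles

universe u v w

/-- `(P, p)` is a model of the quandle presented by generators `p 0, p 1, p 2, …` and
relations `p j ◃ p k = p (k+1)` for all `j < k` (Thompson's quandle): the relations hold
and the universal property of the presentation is satisfied. -/
structure IsThompsonQuandle (P : Type v) [Quandle P] (p : ℕ → P) : Prop where
  rel : ∀ ⦃j k : ℕ⦄, j < k → p j ◃ p k = p (k + 1)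
  lift : ∀ (Q : Type u) [Quandle Q] (q : ℕ → Q),
    (∀ ⦃j k : ℕ⦄, j < k → q j ◃ q k = q (k + 1)) →
    ∃! f : P →◃ Q, ∀ n, f (p n) = q n

/-- Membership in the subquandle generated by a set `s`: the smallest subset of `P`
containing `s` and closed under the quandle operation and its inverse. -/
inductive Subquandle.closure {P : Type v} [Rack P] (s : Set P) : P → Prop
  | of {x : P} : x ∈ s → Subquandle.closure s x
  | act {x y : P} : Subquandle.closure s x → Subquandle.closure s y →
      Subquandle.closure s (x ◃ y)
  | invAct {x y : P} : Subquandle.closure s x → Subquandle.closure s y →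
      Subquandle.closure s (x ◃⁻¹ y)

/-- The standard PL formula for the `n`-th generator of Thompson's group `F`
(in the real-line model): identity below `n`, slope 2 on `[n, n+1]`, translation
by 1 above `n+1`. -/
noncomputable def thFun (n : ℕ) (t : ℝ) : ℝ := if t ≤ n then t else if t ≤ n + 1 then 2 * t - n else t + 1

/-- Inverse of `thFun n`. -/
noncomputable def thInv (n : ℕ) (t : ℝ) : ℝ := if t ≤ n then t else if t ≤ n + 2 then (t + n) / 2 else t - 1

lemma thFun_leftInv (n : ℕ) (t : ℝ) : thInv n (thFun n t) = t := by
  unfold thFun thInv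
  split_ifs with h1 h2 h3 h4 h5 h6 <;> linarith

lemma thFun_rightInv (n : ℕ) (t : ℝ) : thFun n (thInv n t) = t := by
  unfold thFun thInv
  split_ifs with h1 h2 h3 h4 h5 h6 <;> linarith

/-- The `n`-th Thompson generator as a permutation of `ULift ℝ`. -/
noncomputable def thPerm (n : ℕ) : Equiv.Perm (ULift.{v} ℝ) where
  toFun t := ⟨thFun n t.down⟩
  invFun t := ⟨thInv n t.down⟩
  left_inv t := congrArg ULift.up (thFun_leftInv n t.down)
  right_inv t := congrArg ULift.up (thFun_rightInv n t.down)

lemma thPerm_mul {j k : ℕ} (h : j < k) :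
    thPerm.{v} j * thPerm.{v} k = thPerm.{v} (k + 1) * thPerm.{v} j := by
  have hjk : (j : ℝ) + 1 ≤ k := by exact_mod_cast h
  ext t
  obtain ⟨t⟩ := t
  simp only [Equiv.Perm.mul_apply, thPerm, Equiv.coe_fn_mk, ULift.up_inj]
  unfold thFun
  push_cast
  split_ifs <;> linarith

lemma thPerm_rel {j k : ℕ} (h : j < k) :
    (thPerm.{v} j : Quandle.Conj (Equiv.Perm (ULift.{v} ℝ))) ◃ thPerm.{v} k
      = thPerm.{v} (k + 1) := by
  rw [Quandle.conj_act_eq_conj, thPerm_mul h, mul_inv_cancel_right]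

/-- A shelf homomorphism between racks commutes with the inverse action. -/
lemma ShelfHom.map_invAct {R : Type v} {S : Type u} [Rack R] [Rack S] (f : R →◃ S) (x y : R) :
    f (x ◃⁻¹ y) = f x ◃⁻¹ f y := by
  have h : f x ◃ f (x ◃⁻¹ y) = f y := by rw [← f.map_act, Rack.act_invAct_eq]
  rw [← h, Rack.invAct_act_eq]

/-- For each `j`, `p j` lies in the subquandle `P_j` generated by `{p k : k ≥ j}` but not in
`P_{j+1}`, so the chain `P = P₀ ≥ P₁ ≥ P₂ ≥ ⋯` is strictly decreasing. -/
theorem thompson_chain_strict {P : Type v} [Quandle P] {p : ℕ → P}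
    (hP : IsThompsonQuandle.{v} P p) (j : ℕ) :
    Subquandle.closure {x : P | ∃ k, j ≤ k ∧ x = p k} (p j) ∧
    ¬ Subquandle.closure {x : P | ∃ k, j + 1 ≤ k ∧ x = p k} (p j) := by
  constructor
  · exact Subquandle.closure.of ⟨j, le_refl j, rfl⟩
  · intro hmem
    obtain ⟨f, hf, -⟩ :=
      hP.lift (Quandle.Conj (Equiv.Perm (ULift.{v} ℝ))) (fun n => thPerm.{v} n)
        (fun j k h => thPerm_rel h)
    -- every element of the closure maps to a permutation fixing `(-∞, j+1]`
    have key : ∀ z, Subquandle.closure {x : P | ∃ k, j + 1 ≤ k ∧ x = p k} z →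
        ∀ t : ℝ, t ≤ (j : ℝ) + 1 → (f z : Equiv.Perm (ULift.{v} ℝ)) ⟨t⟩ = ⟨t⟩ := by
      intro z hz
      induction hz with
      | of hx =>
        obtain ⟨k, hk, rfl⟩ := hx
        intro t ht
        have hk' : (j : ℝ) + 1 ≤ k := by exact_mod_cast hk
        rw [hf]
        show (⟨thFun k t⟩ : ULift ℝ) = ⟨t⟩
        unfold thFun
        rw [if_pos (by linarith)]
      | @act x y hx hy ihx ihy =>
        intro t ht
        rw [f.map_act, Quandle.conj_act_eq_conj]
        have hinv : ((f x : Equiv.Perm (ULift.{v} ℝ))⁻¹) (⟨t⟩ : ULift ℝ) = ⟨t⟩ := by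
          conv_lhs => rw [← ihx t ht]
          exact Equiv.symm_apply_apply _ _
        rw [Equiv.Perm.mul_apply, Equiv.Perm.mul_apply, hinv, ihy t ht, ihx t ht]
      | @invAct x y hx hy ihx ihy =>
        intro t ht
        rw [f.map_invAct]
        show ((f x)⁻¹ * f y * f x : Equiv.Perm (ULift.{v} ℝ)) ⟨t⟩ = ⟨t⟩
        have hinv : ((f x : Equiv.Perm (ULift.{v} ℝ))⁻¹) (⟨t⟩ : ULift ℝ) = ⟨t⟩ := by
          conv_lhs => rw [← ihx t ht]
          exact Equiv.symm_apply_apply _ _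
        rw [Equiv.Perm.mul_apply, Equiv.Perm.mul_apply, ihx t ht, ihy t ht, hinv]
    have hj := key (p j) hmem ((j : ℝ) + 1/2) (by linarith)
    rw [hf] at hj
    have : thFun j ((j : ℝ) + 1/2) = (j : ℝ) + 1/2 := congrArg ULift.down hj
    unfold thFun at this
    rw [if_neg (by linarith), if_pos (by linarith)] at this
    linarith
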